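/- In the stochastic SAM iteration framework, let C > 0 be a constant, set the constant stepsize β_k = β := μ/(4L(1 + C⁻¹)) for all k, and suppose δ_k ≥ Cβ⁻² and 0 ≤ α_k ≤ min{1, β^{1/2}} for all k. Then for every N ≥ 1, (1/N)·Σ_{k=0}^{N−1} E[‖∇f(x_k)‖₂²] ≤ 16 D_f L(1 + C⁻¹)/(N μ²) + (L + μ⁻¹)σ²/(nL), where D_f := f(x₀) − f^low. -/

import Mathlib

open Matrix MeasureTheory Filter

/-- The Euclidean (ℓ₂) norm of a vector in `ℝ^n`. -/
noncomputable def norm2 {n : ℕ} (v : Fin n → ℝ) : ℝ := Real.sqrt (∑ i, v i ^ 2)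

lemma norm2_nonneg {n : ℕ} (v : Fin n → ℝ) : 0 ≤ norm2 v := Real.sqrt_nonneg _

lemma norm2_sq {n : ℕ} (v : Fin n → ℝ) : norm2 v ^ 2 = ∑ i, v i ^ 2 :=
  Real.sq_sqrt (Finset.sum_nonneg fun i _ => sq_nonneg _)

lemma norm2_neg {n : ℕ} (v : Fin n → ℝ) : norm2 (-v) = norm2 v := by
  unfold norm2; congr 1; apply Finset.sum_congr rfl; intro i _; simp [neg_pow]

lemma norm2_smul {n : ℕ} (t : ℝ) (v : Fin n → ℝ) : norm2 (t • v) = |t| * norm2 v := by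
  unfold norm2
  rw [← Real.sqrt_sq_eq_abs, ← Real.sqrt_mul (sq_nonneg t), Finset.mul_sum]
  congr 1; apply Finset.sum_congr rfl; intro i _; simp [Pi.smul_apply, smul_eq_mul]; ring

lemma abs_apply_le_norm2 {n : ℕ} (v : Fin n → ℝ) (i : Fin n) : |v i| ≤ norm2 v := by
  rw [← Real.sqrt_sq_eq_abs]
  exact Real.sqrt_le_sqrt (Finset.single_le_sum (f := fun j => v j ^ 2)
    (fun j _ => sq_nonneg _) (Finset.mem_univ i))

lemma dotProduct_le_norm2 {n : ℕ} (v w : Fin n → ℝ) : v ⬝ᵥ w ≤ norm2 v * norm2 w := by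
  unfold norm2
  exact Real.sum_mul_le_sqrt_mul_sqrt Finset.univ v w

lemma abs_dotProduct_le_norm2 {n : ℕ} (v w : Fin n → ℝ) : |v ⬝ᵥ w| ≤ norm2 v * norm2 w := by
  rcases abs_cases (v ⬝ᵥ w) with ⟨h, _⟩ | ⟨h, _⟩
  · rw [h]; exact dotProduct_le_norm2 v w
  · rw [h, ← neg_dotProduct]
    calc (-v) ⬝ᵥ w ≤ norm2 (-v) * norm2 w := dotProduct_le_norm2 _ _
    _ = norm2 v * norm2 w := by rw [norm2_neg]

lemma norm2_add_sq {n : ℕ} (v w : Fin n → ℝ) :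
    norm2 (v + w) ^ 2 = norm2 v ^ 2 + 2 * (v ⬝ᵥ w) + norm2 w ^ 2 := by
  simp only [norm2_sq, dotProduct, Finset.mul_sum, ← Finset.sum_add_distrib]
  apply Finset.sum_congr rfl; intro i _; simp [Pi.add_apply]; ring


lemma dotProduct_self_eq {n : ℕ} (v : Fin n → ℝ) : v ⬝ᵥ v = norm2 v ^ 2 := by
  rw [norm2_sq]
  unfold dotProduct
  exact Finset.sum_congr rfl fun i _ => (sq (v i)).symm

lemma gradf_continuous {d : ℕ} (f : (Fin d → ℝ) → ℝ) (hf : ContDiff ℝ 1 f)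
    (gradf : (Fin d → ℝ) → (Fin d → ℝ))
    (hgrad : ∀ x v, fderiv ℝ f x v = gradf x ⬝ᵥ v) : Continuous gradf := by
  have h1 : Continuous fun y => fderiv ℝ f y := hf.continuous_fderiv one_ne_zero
  apply continuous_pi; intro i
  have h2 : (fun y => gradf y i) = fun y => fderiv ℝ f y (Pi.single i 1) := by
    funext y; rw [hgrad]; simp [dotProduct_single]
  rw [h2]
  exact h1.clm_apply continuous_const

lemma descent_lemma {d : ℕ} {L : ℝ} (f : (Fin d → ℝ) → ℝ) (hf : ContDiff ℝ 1 f)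
    (gradf : (Fin d → ℝ) → (Fin d → ℝ))
    (hgrad : ∀ x v, fderiv ℝ f x v = gradf x ⬝ᵥ v)
    (hLip : ∀ x y, norm2 (gradf x - gradf y) ≤ L * norm2 (x - y)) (x v : Fin d → ℝ) :
    f (x + v) ≤ f x + gradf x ⬝ᵥ v + L / 2 * norm2 v ^ 2 := by
  have hcont : Continuous gradf := gradf_continuous f hf gradf hgrad
  have hγ : ∀ t : ℝ, HasDerivAt (fun s : ℝ => x + s • v) v t := by
    intro t
    simpa using ((hasDerivAt_id t).smul_const v).const_add x
  have hφ : ∀ t : ℝ, HasDerivAt (fun s => f (x + s • v)) (gradf (x + t • v) ⬝ᵥ v) t := by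
    intro t
    have hdf : HasFDerivAt f (fderiv ℝ f (x + t • v)) (x + t • v) :=
      ((hf.differentiable one_ne_zero) (x + t • v)).hasFDerivAt
    have h3 := hdf.comp_hasDerivAt t (hγ t)
    simp only [Function.comp, hgrad] at h3; exact h3
  have hdotc : Continuous fun (w : Fin d → ℝ) => w ⬝ᵥ v := by
    unfold dotProduct
    exact continuous_finset_sum _ fun i _ => (continuous_apply i).mul continuous_const
  have hφ'c : Continuous fun t : ℝ => gradf (x + t • v) ⬝ᵥ v :=
    hdotc.comp (hcont.comp (by continuity))
  have key : ∫ t in (0:ℝ)..1, gradf (x + t • v) ⬝ᵥ v = f (x + v) - f x := by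
    have h4 := intervalIntegral.integral_eq_sub_of_hasDerivAt (f := fun s => f (x + s • v))
      (fun t _ => hφ t) (hφ'c.intervalIntegrable 0 1)
    simpa using h4
  have hbd : ∀ t ∈ Set.Icc (0:ℝ) 1,
      gradf (x + t • v) ⬝ᵥ v ≤ gradf x ⬝ᵥ v + (L * norm2 v ^ 2) * t := by
    intro t ht
    have hsub : gradf (x + t • v) ⬝ᵥ v = gradf x ⬝ᵥ v + (gradf (x + t • v) - gradf x) ⬝ᵥ v := by
      rw [sub_dotProduct]; ring
    rw [hsub]
    have h5 : (gradf (x + t • v) - gradf x) ⬝ᵥ v ≤ norm2 (gradf (x + t • v) - gradf x) * norm2 v :=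
      dotProduct_le_norm2 _ _
    have h6 : norm2 (gradf (x + t • v) - gradf x) ≤ L * norm2 (x + t • v - x) := hLip _ _
    have h7 : x + t • v - x = t • v := by abel
    have h8 : norm2 (x + t • v - x) = t * norm2 v := by
      rw [h7, norm2_smul, abs_of_nonneg ht.1]
    rw [h8] at h6
    nlinarith [h5, mul_le_mul_of_nonneg_right h6 (norm2_nonneg v)]
  have haux : IntervalIntegrable (fun t : ℝ => L * norm2 v ^ 2 * t) MeasureTheory.volume 0 1 := by
    apply Continuous.intervalIntegrable; continuity
  have hmono : ∫ t in (0:ℝ)..1, gradf (x + t • v) ⬝ᵥ v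
      ≤ ∫ t in (0:ℝ)..1, (gradf x ⬝ᵥ v + (L * norm2 v ^ 2) * t) := by
    apply intervalIntegral.integral_mono_on (by norm_num) (hφ'c.intervalIntegrable 0 1)
      (intervalIntegrable_const.add haux)
    exact hbd
  have hrhs : ∫ t in (0:ℝ)..1, (gradf x ⬝ᵥ v + (L * norm2 v ^ 2) * t)
      = gradf x ⬝ᵥ v + L / 2 * norm2 v ^ 2 := by
    rw [intervalIntegral.integral_add intervalIntegrable_const haux,
      intervalIntegral.integral_const_mul]
    simp
    ring
  linarith [key ▸ hmono, hrhs ▸ hmono]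

lemma integral_dot_noise_eq_zero {Ω : Type} {m : MeasurableSpace Ω} [m0 : MeasurableSpace Ω]
    (μ : Measure Ω) [IsProbabilityMeasure μ] (hm : m ≤ m0) {d : ℕ}
    (w g : Ω → (Fin d → ℝ)) (hw_meas : Measurable[m] w)
    (hg_int : Integrable g μ)
    (hg_mean : μ[g|m] =ᵐ[μ] w)
    (hwsq_int : Integrable (fun ω => norm2 (w ω) ^ 2) μ)
    (hgsq_int : Integrable (fun ω => norm2 (g ω) ^ 2) μ) :
    ∫ ω, w ω ⬝ᵥ (g ω - w ω) ∂μ = 0 := by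
  have hw_int : Integrable w μ := integrable_condExp.congr hg_mean
  have hbound : Integrable (fun ω => (1/2) * (norm2 (w ω) ^ 2 + norm2 (g ω) ^ 2)) μ :=
    (hwsq_int.add hgsq_int).const_mul (1/2)
  -- componentwise facts
  have key : ∀ i : Fin d, ∫ ω, (w ω i * g ω i - w ω i * w ω i) ∂μ = 0 := by
    intro i
    have hwi_meas_m : Measurable[m] (fun ω => w ω i) := (measurable_pi_apply i).comp hw_meas
    have hwi_sm : StronglyMeasurable[m] (fun ω => w ω i) := hwi_meas_m.stronglyMeasurable
    have hwi_int : Integrable (fun ω => w ω i) μ :=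
      (ContinuousLinearMap.proj (R := ℝ) (φ := fun _ : Fin d => ℝ) i).integrable_comp hw_int
    have hgi_int : Integrable (fun ω => g ω i) μ :=
      (ContinuousLinearMap.proj (R := ℝ) (φ := fun _ : Fin d => ℝ) i).integrable_comp hg_int
    have hwigi_int : Integrable (fun ω => w ω i * g ω i) μ := by
      refine Integrable.mono' hbound (hwi_int.1.mul hgi_int.1) ?_
      filter_upwards with ω
      have h1 := abs_apply_le_norm2 (w ω) i
      have h2 := abs_apply_le_norm2 (g ω) i
      rw [Real.norm_eq_abs, abs_mul]
      nlinarith [mul_le_mul h1 h2 (abs_nonneg _) (norm2_nonneg _),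
        sq_nonneg (norm2 (w ω) - norm2 (g ω)), abs_nonneg (w ω i), abs_nonneg (g ω i)]
    have hwiwi_int : Integrable (fun ω => w ω i * w ω i) μ := by
      refine Integrable.mono' hwsq_int (hwi_int.1.mul hwi_int.1) ?_
      filter_upwards with ω
      have h1 := abs_apply_le_norm2 (w ω) i
      rw [Real.norm_eq_abs, abs_mul]
      nlinarith [mul_le_mul h1 h1 (abs_nonneg _) (norm2_nonneg _)]
    have hcond_gi : μ[(fun ω => g ω i)|m] =ᵐ[μ] (fun ω => w ω i) := by
      refine (ae_eq_condExp_of_forall_setIntegral_eq hm hgi_int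
        (fun s _ _ => hwi_int.integrableOn) ?_ hwi_sm.aestronglyMeasurable).symm
      intro s hs _
      have hps : ∫ ω in s, w ω ∂μ = ∫ ω in s, g ω ∂μ := by
        rw [← setIntegral_condExp hm hg_int hs]
        exact integral_congr_ae (ae_restrict_of_ae hg_mean.symm)
      have hcw := ContinuousLinearMap.integral_comp_comm
        (ContinuousLinearMap.proj (R := ℝ) (φ := fun _ : Fin d => ℝ) i)
        (hw_int.integrableOn (s := s))
      have hcg := ContinuousLinearMap.integral_comp_comm
        (ContinuousLinearMap.proj (R := ℝ) (φ := fun _ : Fin d => ℝ) i)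
        (hg_int.integrableOn (s := s))
      simp only [ContinuousLinearMap.proj_apply] at hcw hcg
      rw [hcw, hcg, hps]
    have hpull := condExp_mul_of_stronglyMeasurable_left (μ := μ) hwi_sm
      (show Integrable ((fun ω => w ω i) * (fun ω => g ω i)) μ from hwigi_int) hgi_int
    have heq : ∫ ω, w ω i * g ω i ∂μ = ∫ ω, w ω i * w ω i ∂μ := by
      calc ∫ ω, w ω i * g ω i ∂μ
          = ∫ ω, (μ[(fun ω => w ω i) * (fun ω => g ω i)|m]) ω ∂μ := (integral_condExp hm).symm
        _ = ∫ ω, w ω i * (μ[(fun ω => g ω i)|m]) ω ∂μ := by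
            refine integral_congr_ae (hpull.mono fun ω hω => ?_)
            simpa using hω
        _ = ∫ ω, w ω i * w ω i ∂μ := by
            refine integral_congr_ae (hcond_gi.mono fun ω hω => ?_)
            dsimp only
            rw [show (μ[fun ω => g ω i|m]) ω = w ω i from hω]
    rw [integral_sub hwigi_int hwiwi_int, heq, sub_self]
  have hfun : (fun ω => w ω ⬝ᵥ (g ω - w ω))
      = fun ω => ∑ i, (w ω i * g ω i - w ω i * w ω i) := by
    funext ω
    simp [dotProduct, Pi.sub_apply, mul_sub]
  rw [hfun, integral_finset_sum]
  · exact Finset.sum_eq_zero fun i _ => key i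
  · intro i _
    -- integrability of each summand
    have hwi_int : Integrable (fun ω => w ω i) μ :=
      (ContinuousLinearMap.proj (R := ℝ) (φ := fun _ : Fin d => ℝ) i).integrable_comp hw_int
    have hgi_int : Integrable (fun ω => g ω i) μ :=
      (ContinuousLinearMap.proj (R := ℝ) (φ := fun _ : Fin d => ℝ) i).integrable_comp hg_int
    have hwigi_int : Integrable (fun ω => w ω i * g ω i) μ := by
      refine Integrable.mono' hbound (hwi_int.1.mul hgi_int.1) ?_
      filter_upwards with ω
      have h1 := abs_apply_le_norm2 (w ω) i
      have h2 := abs_apply_le_norm2 (g ω) i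
      rw [Real.norm_eq_abs, abs_mul]
      nlinarith [mul_le_mul h1 h2 (abs_nonneg _) (norm2_nonneg _),
        sq_nonneg (norm2 (w ω) - norm2 (g ω)), abs_nonneg (w ω i), abs_nonneg (g ω i)]
    have hwiwi_int : Integrable (fun ω => w ω i * w ω i) μ := by
      refine Integrable.mono' hwsq_int (hwi_int.1.mul hwi_int.1) ?_
      filter_upwards with ω
      have h1 := abs_apply_le_norm2 (w ω) i
      rw [Real.norm_eq_abs, abs_mul]
      nlinarith [mul_le_mul h1 h1 (abs_nonneg _) (norm2_nonneg _)]
    exact hwigi_int.sub hwiwi_int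

set_option maxHeartbeats 1000000 in
lemma step_pointwise {d : ℕ} {L muc C b a δ : ℝ}
    (hL : 0 < L) (hmuc : muc ∈ Set.Ioo (0:ℝ) 1) (hC : 0 < C)
    (hb : b = muc / (4 * L * (1 + C⁻¹))) (hδ : C / b ^ 2 ≤ δ)
    (ha0 : 0 ≤ a) (ha1 : a ≤ min 1 (Real.sqrt b))
    (f : (Fin d → ℝ) → ℝ) (hf : ContDiff ℝ 1 f)
    (gradf : (Fin d → ℝ) → (Fin d → ℝ))
    (hgrad : ∀ x v, fderiv ℝ f x v = gradf x ⬝ᵥ v)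
    (hLip : ∀ x y, norm2 (gradf x - gradf y) ≤ L * norm2 (x - y))
    (xk gg : Fin d → ℝ) (Hm : Matrix (Fin d) (Fin d) ℝ)
    (h1 : ∀ p, b * muc * norm2 p ^ 2 ≤ p ⬝ᵥ Hm.mulVec p)
    (h2 : ∀ v, norm2 (Hm.mulVec v) ^ 2
        ≤ 2 * (b ^ 2 * (1 + 2 * a ^ 2 - 2 * a) + a ^ 2 * δ⁻¹) * norm2 v ^ 2)
    (h3 : ∀ v, norm2 ((b • (1 : Matrix (Fin d) (Fin d) ℝ) - Hm).mulVec v)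
        ≤ a * ((Real.sqrt δ)⁻¹ + b) * norm2 v) :
    f (xk + Hm.mulVec (-gg)) ≤ f xk
      - (b * muc / 4) * norm2 (gradf xk) ^ 2
      + (b * muc / 2 - b) * (gradf xk ⬝ᵥ (gg - gradf xk))
      + (b / (4 * L) + b * muc / 4) * norm2 (gg - gradf xk) ^ 2 := by
  obtain ⟨hm0, hm1⟩ := hmuc
  have hC1 : (0:ℝ) < 1 + C⁻¹ := by positivity
  have hbpos : 0 < b := by rw [hb]; positivity
  have hδpos : 0 < δ := lt_of_lt_of_le (by positivity) hδ
  set w := gradf xk with hw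
  set e := gg - w with he
  have hgge : gg = w + e := by rw [he]; abel
  set W := norm2 w with hW
  set E := norm2 e with hE
  have hW0 : 0 ≤ W := norm2_nonneg w
  have hE0 : 0 ≤ E := norm2_nonneg e
  set v := Hm.mulVec (-gg) with hv
  -- descent
  have hdes : f (xk + v) ≤ f xk + w ⬝ᵥ v + L / 2 * norm2 v ^ 2 :=
    descent_lemma f hf gradf hgrad hLip xk v
  -- norm of v
  have hvnorm : norm2 v = norm2 (Hm.mulVec gg) := by
    rw [hv, Matrix.mulVec_neg, norm2_neg]
  -- key constant identity:  b * (4 * L * (1 + C⁻¹)) = muc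
  have hbid : b * (4 * L * (1 + C⁻¹)) = muc := by
    rw [hb]; field_simp
  -- quadratic bound
  have hquad : L / 2 * norm2 v ^ 2 ≤ (b * muc / 4) * (W ^ 2 + 2 * (w ⬝ᵥ e) + E ^ 2) := by
    have hδinv : δ⁻¹ ≤ b ^ 2 / C := by
      calc δ⁻¹ ≤ (C / b ^ 2)⁻¹ := inv_anti₀ (by positivity) hδ
        _ = b ^ 2 / C := by rw [inv_div]
    have ha1' : a ≤ 1 := le_trans ha1 (min_le_left _ _)
    have hcoef : 2 * (b ^ 2 * (1 + 2 * a ^ 2 - 2 * a) + a ^ 2 * δ⁻¹)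
        ≤ 2 * b ^ 2 * (1 + C⁻¹) := by
      have h5 : b ^ 2 * (1 + 2 * a ^ 2 - 2 * a) ≤ b ^ 2 := by
        linarith [mul_nonneg (mul_nonneg ha0 (sub_nonneg.mpr ha1')) (sq_nonneg b)]
      have h6 : a ^ 2 * δ⁻¹ ≤ b ^ 2 * C⁻¹ := by
        have ha2 : a ^ 2 ≤ 1 := pow_le_one₀ ha0 ha1'
        have h7 : a ^ 2 * δ⁻¹ ≤ δ⁻¹ := by
          have h7' := mul_nonneg (sub_nonneg.mpr ha2) (inv_nonneg.2 hδpos.le)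
          linarith [h7']
        calc a ^ 2 * δ⁻¹ ≤ δ⁻¹ := h7
          _ ≤ b ^ 2 / C := hδinv
          _ = b ^ 2 * C⁻¹ := by ring
      linarith
    have h8 : norm2 (Hm.mulVec gg) ^ 2 ≤ 2 * b ^ 2 * (1 + C⁻¹) * norm2 gg ^ 2 := by
      calc norm2 (Hm.mulVec gg) ^ 2
          ≤ 2 * (b ^ 2 * (1 + 2 * a ^ 2 - 2 * a) + a ^ 2 * δ⁻¹) * norm2 gg ^ 2 := h2 gg
        _ ≤ 2 * b ^ 2 * (1 + C⁻¹) * norm2 gg ^ 2 :=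
            mul_le_mul_of_nonneg_right hcoef (sq_nonneg _)
    have h9 : norm2 gg ^ 2 = W ^ 2 + 2 * (w ⬝ᵥ e) + E ^ 2 := by
      rw [hgge]; exact norm2_add_sq w e
    have h10 : L / 2 * norm2 v ^ 2 ≤ L * b ^ 2 * (1 + C⁻¹) * norm2 gg ^ 2 := by
      rw [hvnorm]
      have h10' := mul_le_mul_of_nonneg_left h8 (show (0:ℝ) ≤ L / 2 by positivity)
      linarith [h10']
    have h11 : L * b ^ 2 * (1 + C⁻¹) = b * muc / 4 := by
      have h12 : b * muc = b * (b * (4 * L * (1 + C⁻¹))) := by rw [hbid]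
      linarith [h12]
    rw [← h9, ← h11]; exact h10
  -- linear term decomposition
  have hveq : v = -(Hm.mulVec w) - Hm.mulVec e := by
    rw [hv, hgge, Matrix.mulVec_neg, Matrix.mulVec_add]; abel
  have hsub : (b • (1 : Matrix (Fin d) (Fin d) ℝ) - Hm).mulVec e = b • e - Hm.mulVec e := by
    rw [Matrix.sub_mulVec, Matrix.smul_mulVec, Matrix.one_mulVec]
  have t1 : w ⬝ᵥ v = -(w ⬝ᵥ Hm.mulVec w) - (w ⬝ᵥ Hm.mulVec e) := by
    rw [hveq, dotProduct_sub, dotProduct_neg]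
  have t2 : w ⬝ᵥ ((b • (1 : Matrix (Fin d) (Fin d) ℝ) - Hm).mulVec e)
      = b * (w ⬝ᵥ e) - (w ⬝ᵥ Hm.mulVec e) := by
    rw [hsub, dotProduct_sub, dotProduct_smul, smul_eq_mul]
  have hP1' : b * muc * W ^ 2 ≤ w ⬝ᵥ Hm.mulVec w := h1 w
  -- cross term bound
  have hcross : w ⬝ᵥ ((b • (1 : Matrix (Fin d) (Fin d) ℝ) - Hm).mulVec e)
      ≤ (b * muc / 2) * W ^ 2 + (b / (4 * L)) * E ^ 2 := by
    set A := a * ((Real.sqrt δ)⁻¹ + b) with hA_def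
    have hcs : w ⬝ᵥ ((b • (1 : Matrix (Fin d) (Fin d) ℝ) - Hm).mulVec e) ≤ A * (W * E) := by
      calc w ⬝ᵥ ((b • (1 : Matrix (Fin d) (Fin d) ℝ) - Hm).mulVec e)
          ≤ W * norm2 ((b • (1 : Matrix (Fin d) (Fin d) ℝ) - Hm).mulVec e) :=
            dotProduct_le_norm2 _ _
        _ ≤ W * (A * E) := mul_le_mul_of_nonneg_left (h3 e) hW0
        _ = A * (W * E) := by ring
    set u := Real.sqrt (2 * L * muc) with hu
    have hu0 : 0 ≤ u := Real.sqrt_nonneg _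
    have hu2 : u ^ 2 = 2 * L * muc := Real.sq_sqrt (by positivity)
    have hA : A ≤ b * u / (2 * L) := by
      have hsqrtb : a ≤ Real.sqrt b := le_trans ha1 (min_le_right _ _)
      have hsb0 : 0 ≤ Real.sqrt b := Real.sqrt_nonneg b
      have hsb2 : Real.sqrt b ^ 2 = b := Real.sq_sqrt hbpos.le
      have hsC : (0:ℝ) < Real.sqrt C := Real.sqrt_pos.2 hC
      set r := (Real.sqrt C)⁻¹ with hr
      have hr0 : 0 < r := by positivity
      have hr2 : r ^ 2 = C⁻¹ := by
        rw [hr, inv_pow, Real.sq_sqrt hC.le]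
      have hsδ : Real.sqrt C / b ≤ Real.sqrt δ := by
        have hdiv : Real.sqrt (C / b ^ 2) = Real.sqrt C / b := by
          rw [Real.sqrt_div hC.le, Real.sqrt_sq hbpos.le]
        rw [← hdiv]; exact Real.sqrt_le_sqrt hδ
      have hsδinv : (Real.sqrt δ)⁻¹ ≤ b * r := by
        have h0 : 0 < Real.sqrt C / b := by positivity
        calc (Real.sqrt δ)⁻¹ ≤ (Real.sqrt C / b)⁻¹ := inv_anti₀ h0 hsδ
          _ = b / Real.sqrt C := by rw [inv_div]
          _ = b * r := by rw [hr, div_eq_mul_inv]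
      have hAle : A ≤ Real.sqrt b * (b * r + b) := by
        rw [hA_def]
        apply mul_le_mul hsqrtb (add_le_add_left hsδinv b) (by positivity) hsb0
      have hRHS0 : 0 ≤ b * u / (2 * L) := by positivity
      have hLHS0 : 0 ≤ Real.sqrt b * (b * r + b) := by positivity
      have hr_am : 2 * r ≤ 1 + C⁻¹ := by linarith [sq_nonneg (1 - r), hr2.le, hr2.ge]
      have hsq : (Real.sqrt b * (b * r + b)) ^ 2 ≤ (b * u / (2 * L)) ^ 2 := by
        have hrhs_eq : (b * u / (2 * L)) ^ 2 = 2 * b ^ 3 * (1 + C⁻¹) := by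
          rw [div_pow, mul_pow, hu2]
          rw [show muc = b * (4 * L * (1 + C⁻¹)) from hbid.symm]
          field_simp
          ring
        have hlhs_eq : (Real.sqrt b * (b * r + b)) ^ 2 = b ^ 3 * (r ^ 2 + 2 * r + 1) := by
          rw [mul_pow, hsb2]; ring
        rw [hrhs_eq, hlhs_eq, hr2]
        have hb3 : (0:ℝ) ≤ b ^ 3 := by positivity
        linarith [mul_le_mul_of_nonneg_left hr_am hb3]
      calc A ≤ Real.sqrt b * (b * r + b) := hAle
        _ = Real.sqrt ((Real.sqrt b * (b * r + b)) ^ 2) := (Real.sqrt_sq hLHS0).symm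
        _ ≤ Real.sqrt ((b * u / (2 * L)) ^ 2) := Real.sqrt_le_sqrt hsq
        _ = b * u / (2 * L) := Real.sqrt_sq hRHS0
    have hyoung : (b * u / (2 * L)) * (W * E) ≤ (b * muc / 2) * W ^ 2 + (b / (4 * L)) * E ^ 2 := by
      have hpos : (0:ℝ) ≤ b / (4 * L) := by positivity
      have hsqn := mul_nonneg hpos (sq_nonneg (u * W - E))
      have hWu : (b / (4 * L)) * u ^ 2 = b * muc / 2 := by
        rw [hu2]; field_simp; ring
      have hWu2 : (b / (4 * L)) * (u ^ 2 * W ^ 2) = (b * muc / 2) * W ^ 2 := by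
        rw [← mul_assoc, hWu]
      have hexp : (b / (4 * L)) * ((u * W - E) ^ 2)
          = (b / (4 * L)) * (u ^ 2 * W ^ 2) - (b * u / (2 * L)) * (W * E)
            + (b / (4 * L)) * E ^ 2 := by ring
      rw [hexp] at hsqn
      linarith [hsqn, hWu2]
    have hWE : 0 ≤ W * E := mul_nonneg hW0 hE0
    calc w ⬝ᵥ ((b • (1 : Matrix (Fin d) (Fin d) ℝ) - Hm).mulVec e)
        ≤ A * (W * E) := hcs
      _ ≤ (b * u / (2 * L)) * (W * E) := mul_le_mul_of_nonneg_right hA hWE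
      _ ≤ (b * muc / 2) * W ^ 2 + (b / (4 * L)) * E ^ 2 := hyoung
  linarith [hdes, hquad, hP1', hcross, t1.le, t1.ge, t2.le, t2.ge]


/-- Key bound in the proof of **Theorem 4**: with constant stepsize
`β = μ/(4L(1+C⁻¹))`, `δ_k ≥ Cβ⁻²`, `0 ≤ α_k ≤ min{1, β^{1/2}}`, for every `N ≥ 1`:
`(1/N) Σ_{k<N} E‖∇f(x_k)‖₂² ≤ 16 D_f L(1+C⁻¹)/(Nμ²) + (L+μ⁻¹)σ²/(nL)` with
`D_f = f(x₀) − f^low`. -/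
theorem sam_constant_stepsize_bound
    {Ω : Type} [m0 : MeasurableSpace Ω] (μ : Measure Ω) [IsProbabilityMeasure μ]
    (𝓕 : MeasureTheory.Filtration ℕ m0)
    (d n : ℕ) (hd : 1 ≤ d) (hn : 1 ≤ n)
    (σ muc L flow C : ℝ) (hσ : 0 < σ) (hmuc : muc ∈ Set.Ioo (0 : ℝ) 1)
    (hL : 0 < L) (hC : 0 < C)
    (f : (Fin d → ℝ) → ℝ) (hf : ContDiff ℝ 1 f) (hflow : ∀ x, flow ≤ f x)
    (gradf : (Fin d → ℝ) → (Fin d → ℝ))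
    (hgrad : ∀ x v, fderiv ℝ f x v = gradf x ⬝ᵥ v)
    (hLip : ∀ x y, norm2 (gradf x - gradf y) ≤ L * norm2 (x - y))
    (α β δ : ℕ → ℝ)
    (x g : ℕ → Ω → (Fin d → ℝ)) (H : ℕ → Ω → Matrix (Fin d) (Fin d) ℝ)
    (x0 : Fin d → ℝ) (hx0 : ∀ ω, x 0 ω = x0)
    (hx_meas : ∀ k, Measurable[𝓕 k] (x k))
    (hH_meas : ∀ k i j, Measurable[𝓕 (k + 1)] fun ω => H k ω i j)
    (hupd : ∀ k ω, x (k + 1) ω = x k ω + (H k ω).mulVec (-(g k ω)))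
    (hg_int : ∀ k, Integrable (g k) μ)
    (hg_mean : ∀ k, μ[g k | 𝓕 k] =ᵐ[μ] fun ω => gradf (x k ω))
    (hg_var_int : ∀ k, Integrable (fun ω => norm2 (g k ω - gradf (x k ω)) ^ 2) μ)
    (hg_var : ∀ k,
      μ[(fun ω => norm2 (g k ω - gradf (x k ω)) ^ 2) | 𝓕 k] ≤ᵐ[μ] fun _ => σ ^ 2 / n)
    (hP1 : ∀ k, ∀ᵐ ω ∂μ, ∀ p : Fin d → ℝ,
      β k * muc * norm2 p ^ 2 ≤ p ⬝ᵥ (H k ω).mulVec p)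
    (hP2 : ∀ k, ∀ᵐ ω ∂μ, ∀ v : Fin d → ℝ,
      norm2 ((H k ω).mulVec v) ^ 2
        ≤ 2 * (β k ^ 2 * (1 + 2 * α k ^ 2 - 2 * α k) + α k ^ 2 * (δ k)⁻¹) * norm2 v ^ 2)
    (hP3 : ∀ k, ∀ᵐ ω ∂μ, ∀ v : Fin d → ℝ,
      norm2 ((β k • (1 : Matrix (Fin d) (Fin d) ℝ) - H k ω).mulVec v)
        ≤ α k * ((Real.sqrt (δ k))⁻¹ + β k) * norm2 v)
    (hf_int : ∀ k, Integrable (fun ω => f (x k ω)) μ)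
    (hgradsq_int : ∀ k, Integrable (fun ω => norm2 (gradf (x k ω)) ^ 2) μ)
    (hgsq_int : ∀ k, Integrable (fun ω => norm2 (g k ω) ^ 2) μ)
    (hβ : ∀ k, β k = muc / (4 * L * (1 + C⁻¹)))
    (hδ : ∀ k, C / β k ^ 2 ≤ δ k)
    (hα : ∀ k, 0 ≤ α k ∧ α k ≤ min 1 (Real.sqrt (β k))) :
    ∀ N : ℕ, 1 ≤ N →
      (1 / (N : ℝ)) * ∑ k ∈ Finset.range N, ∫ ω, norm2 (gradf (x k ω)) ^ 2 ∂μ ≤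
        16 * (f x0 - flow) * L * (1 + C⁻¹) / ((N : ℝ) * muc ^ 2)
          + (L + muc⁻¹) * σ ^ 2 / (n * L) := by
  intro N hN
  obtain ⟨hm0, hm1⟩ := hmuc
  have hC1 : (0:ℝ) < 1 + C⁻¹ := by positivity
  set B := muc / (4 * L * (1 + C⁻¹)) with hB
  have hBpos : 0 < B := by rw [hB]; positivity
  set c2 := B / (4 * L) + B * muc / 4 with hc2
  have hc2pos : 0 < c2 := by rw [hc2]; positivity
  have hnpos : (0:ℝ) < (n:ℝ) := by exact_mod_cast hn
  have hconts : Continuous gradf := gradf_continuous f hf gradf hgrad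
  -- pointwise a.e. step inequality
  have hstep_ae : ∀ k, ∀ᵐ ω ∂μ, f (x (k+1) ω) ≤ f (x k ω)
      - (B * muc / 4) * norm2 (gradf (x k ω)) ^ 2
      + (B * muc / 2 - B) * (gradf (x k ω) ⬝ᵥ (g k ω - gradf (x k ω)))
      + c2 * norm2 (g k ω - gradf (x k ω)) ^ 2 := by
    intro k
    filter_upwards [hP1 k, hP2 k, hP3 k] with ω h1 h2 h3
    have hsp := step_pointwise hL ⟨hm0, hm1⟩ hC (hβ k) (hδ k) (hα k).1 (hα k).2
      f hf gradf hgrad hLip (x k ω) (g k ω) (H k ω) h1 h2 h3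
    rw [hupd k ω]
    rw [hβ k] at hsp
    exact hsp
  -- integrability of the dot-product term
  have hwmeas : ∀ k, Measurable fun ω => gradf (x k ω) :=
    fun k => hconts.measurable.comp ((hx_meas k).mono (𝓕.le k) le_rfl)
  have hdotc : Continuous fun p : (Fin d → ℝ) × (Fin d → ℝ) => p.1 ⬝ᵥ p.2 := by
    unfold dotProduct
    exact continuous_finset_sum _ fun i _ =>
      ((continuous_apply i).comp continuous_fst).mul ((continuous_apply i).comp continuous_snd)
  have hwg_int : ∀ k, Integrable (fun ω => gradf (x k ω) ⬝ᵥ g k ω) μ := by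
    intro k
    refine Integrable.mono' (((hgradsq_int k).add (hgsq_int k)).const_mul (1/2)) ?_ ?_
    · exact hdotc.comp_aestronglyMeasurable
        (((hwmeas k).aestronglyMeasurable).prodMk (hg_int k).1)
    · filter_upwards with ω
      rw [Real.norm_eq_abs]
      simp only [Pi.add_apply]
      have h1 := abs_dotProduct_le_norm2 (gradf (x k ω)) (g k ω)
      have h2 := sq_nonneg (norm2 (gradf (x k ω)) - norm2 (g k ω))
      nlinarith [h1, h2]
  have hdot_fun : ∀ k, (fun ω => gradf (x k ω) ⬝ᵥ (g k ω - gradf (x k ω)))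
      = fun ω => (gradf (x k ω) ⬝ᵥ g k ω) - norm2 (gradf (x k ω)) ^ 2 := by
    intro k; funext ω
    rw [dotProduct_sub, dotProduct_self_eq]
  have hdot_int : ∀ k, Integrable (fun ω => gradf (x k ω) ⬝ᵥ (g k ω - gradf (x k ω))) μ := by
    intro k
    rw [hdot_fun k]
    exact (hwg_int k).sub (hgradsq_int k)
  have hdot_zero : ∀ k, ∫ ω, gradf (x k ω) ⬝ᵥ (g k ω - gradf (x k ω)) ∂μ = 0 := by
    intro k
    exact integral_dot_noise_eq_zero μ (𝓕.le k) (fun ω => gradf (x k ω)) (g k)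
      (hconts.measurable.comp (hx_meas k)) (hg_int k) (hg_mean k)
      (hgradsq_int k) (hgsq_int k)
  -- variance bound
  have hvar_le : ∀ k, ∫ ω, norm2 (g k ω - gradf (x k ω)) ^ 2 ∂μ ≤ σ ^ 2 / n := by
    intro k
    have h1 : ∫ ω, norm2 (g k ω - gradf (x k ω)) ^ 2 ∂μ
        = ∫ ω, (μ[(fun ω => norm2 (g k ω - gradf (x k ω)) ^ 2)|𝓕 k]) ω ∂μ :=
      (integral_condExp (𝓕.le k)).symm
    have h2 : ∫ ω, (μ[(fun ω => norm2 (g k ω - gradf (x k ω)) ^ 2)|𝓕 k]) ω ∂μ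
        ≤ ∫ _ω, σ ^ 2 / n ∂μ :=
      integral_mono_ae integrable_condExp (integrable_const _) (hg_var k)
    rw [h1]
    calc ∫ ω, (μ[(fun ω => norm2 (g k ω - gradf (x k ω)) ^ 2)|𝓕 k]) ω ∂μ
        ≤ ∫ _ω, σ ^ 2 / n ∂μ := h2
      _ = σ ^ 2 / n := by simp [measure_univ]
  -- per-step integral inequality
  have hstep : ∀ k, ∫ ω, f (x (k+1) ω) ∂μ ≤ ∫ ω, f (x k ω) ∂μ
      - (B * muc / 4) * ∫ ω, norm2 (gradf (x k ω)) ^ 2 ∂μ + c2 * (σ ^ 2 / n) := by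
    intro k
    have hRHS_int : Integrable (fun ω => f (x k ω)
        - (B * muc / 4) * norm2 (gradf (x k ω)) ^ 2
        + (B * muc / 2 - B) * (gradf (x k ω) ⬝ᵥ (g k ω - gradf (x k ω)))
        + c2 * norm2 (g k ω - gradf (x k ω)) ^ 2) μ :=
      (((hf_int k).sub ((hgradsq_int k).const_mul (B * muc / 4))).add
        ((hdot_int k).const_mul (B * muc / 2 - B))).add ((hg_var_int k).const_mul c2)
    have hmono := integral_mono_ae (hf_int (k+1)) hRHS_int (hstep_ae k)
    have hi1 : Integrable (fun ω => f (x k ω)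
        - (B * muc / 4) * norm2 (gradf (x k ω)) ^ 2) μ :=
      (hf_int k).sub ((hgradsq_int k).const_mul (B * muc / 4))
    have hi2 : Integrable (fun ω => f (x k ω)
        - (B * muc / 4) * norm2 (gradf (x k ω)) ^ 2
        + (B * muc / 2 - B) * (gradf (x k ω) ⬝ᵥ (g k ω - gradf (x k ω)))) μ :=
      hi1.add ((hdot_int k).const_mul (B * muc / 2 - B))
    have e3 : ∫ ω, (f (x k ω)
        - (B * muc / 4) * norm2 (gradf (x k ω)) ^ 2
        + (B * muc / 2 - B) * (gradf (x k ω) ⬝ᵥ (g k ω - gradf (x k ω)))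
        + c2 * norm2 (g k ω - gradf (x k ω)) ^ 2) ∂μ
        = ∫ ω, (f (x k ω)
          - (B * muc / 4) * norm2 (gradf (x k ω)) ^ 2
          + (B * muc / 2 - B) * (gradf (x k ω) ⬝ᵥ (g k ω - gradf (x k ω)))) ∂μ
          + ∫ ω, c2 * norm2 (g k ω - gradf (x k ω)) ^ 2 ∂μ :=
      integral_add hi2 ((hg_var_int k).const_mul c2)
    have e2 : ∫ ω, (f (x k ω)
        - (B * muc / 4) * norm2 (gradf (x k ω)) ^ 2
        + (B * muc / 2 - B) * (gradf (x k ω) ⬝ᵥ (g k ω - gradf (x k ω)))) ∂μ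
        = ∫ ω, (f (x k ω) - (B * muc / 4) * norm2 (gradf (x k ω)) ^ 2) ∂μ
          + ∫ ω, (B * muc / 2 - B) * (gradf (x k ω) ⬝ᵥ (g k ω - gradf (x k ω))) ∂μ :=
      integral_add hi1 ((hdot_int k).const_mul (B * muc / 2 - B))
    have e1 : ∫ ω, (f (x k ω) - (B * muc / 4) * norm2 (gradf (x k ω)) ^ 2) ∂μ
        = ∫ ω, f (x k ω) ∂μ - ∫ ω, (B * muc / 4) * norm2 (gradf (x k ω)) ^ 2 ∂μ :=
      integral_sub (hf_int k) ((hgradsq_int k).const_mul (B * muc / 4))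
    have e0a : ∫ ω, (B * muc / 4) * norm2 (gradf (x k ω)) ^ 2 ∂μ
        = (B * muc / 4) * ∫ ω, norm2 (gradf (x k ω)) ^ 2 ∂μ := integral_const_mul _ _
    have e0b : ∫ ω, (B * muc / 2 - B) * (gradf (x k ω) ⬝ᵥ (g k ω - gradf (x k ω))) ∂μ
        = (B * muc / 2 - B) * ∫ ω, gradf (x k ω) ⬝ᵥ (g k ω - gradf (x k ω)) ∂μ :=
      integral_const_mul _ _
    have e0c : ∫ ω, c2 * norm2 (g k ω - gradf (x k ω)) ^ 2 ∂μ
        = c2 * ∫ ω, norm2 (g k ω - gradf (x k ω)) ^ 2 ∂μ := integral_const_mul _ _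
    have hc2' := mul_le_mul_of_nonneg_left (hvar_le k) hc2pos.le
    have hz := hdot_zero k
    rw [e3, e2, e1, e0a, e0b, e0c, hz, mul_zero] at hmono
    linarith [hmono, hc2']
  -- telescoping
  have hF0 : ∫ ω, f (x 0 ω) ∂μ = f x0 := by
    have hx0' : (fun ω => f (x 0 ω)) = fun _ => f x0 := funext fun ω => by rw [hx0]
    rw [hx0']; simp [measure_univ]
  have hFlow : ∀ k, flow ≤ ∫ ω, f (x k ω) ∂μ := by
    intro k
    have h := integral_mono_ae (integrable_const flow) (hf_int k)
      (Filter.Eventually.of_forall fun ω => hflow (x k ω))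
    simpa [measure_univ] using h
  have hrec : ∀ M : ℕ, (B * muc / 4) * (∑ k ∈ Finset.range M,
      ∫ ω, norm2 (gradf (x k ω)) ^ 2 ∂μ) + ∫ ω, f (x M ω) ∂μ
      ≤ f x0 + M * (c2 * (σ ^ 2 / n)) := by
    intro M
    induction M with
    | zero => simp [hF0]
    | succ m ih =>
        rw [Finset.sum_range_succ]
        have hs := hstep m
        push_cast
        push_cast at ih
        linarith [hs, ih]
  -- final arithmetic
  have hNpos : (0:ℝ) < (N:ℝ) := by exact_mod_cast hN
  set S := ∑ k ∈ Finset.range N, ∫ ω, norm2 (gradf (x k ω)) ^ 2 ∂μ with hS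
  have hsum : (B * muc / 4) * S ≤ (f x0 - flow) + N * (c2 * (σ ^ 2 / n)) := by
    have := hrec N
    linarith [hFlow N]
  have hSle : S ≤ (4 / (B * muc)) * ((f x0 - flow) + N * (c2 * (σ ^ 2 / n))) := by
    have h := mul_le_mul_of_nonneg_left hsum (le_of_lt (by positivity : (0:ℝ) < 4 / (B * muc)))
    calc S = (4 / (B * muc)) * ((B * muc / 4) * S) := by field_simp
      _ ≤ (4 / (B * muc)) * ((f x0 - flow) + N * (c2 * (σ ^ 2 / n))) := h
  have hfinal_eq : (1 / (N:ℝ)) * ((4 / (B * muc)) * ((f x0 - flow) + N * (c2 * (σ ^ 2 / n))))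
      = 16 * (f x0 - flow) * L * (1 + C⁻¹) / ((N : ℝ) * muc ^ 2)
        + (L + muc⁻¹) * σ ^ 2 / (n * L) := by
    rw [hc2, hB]
    have hCne : C ≠ 0 := ne_of_gt hC
    have hC1ne : (1 + C⁻¹) ≠ 0 := ne_of_gt hC1
    have hLne : L ≠ 0 := ne_of_gt hL
    have hmne : muc ≠ 0 := ne_of_gt hm0
    have hNne : (N:ℝ) ≠ 0 := ne_of_gt hNpos
    have hnne : (n:ℝ) ≠ 0 := ne_of_gt hnpos
    field_simp
    ring
  calc (1 / (N : ℝ)) * S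
      ≤ (1 / (N:ℝ)) * ((4 / (B * muc)) * ((f x0 - flow) + N * (c2 * (σ ^ 2 / n)))) :=
        mul_le_mul_of_nonneg_left hSle (by positivity)
    _ = 16 * (f x0 - flow) * L * (1 + C⁻¹) / ((N : ℝ) * muc ^ 2)
        + (L + muc⁻¹) * σ ^ 2 / (n * L) := hfinal_eq
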